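/- arXiv:1811.01988 — 2 statements merged into one kernel-verified Lean document; each statement's English description precedes it below -/
import Mathlib

section
/- Define R_ideal as the set of (x, y, z) ∈ ℝ^η × ℝ × ℝ^d with x ∈ D, z ∈ Δ^d, such that there exist x̃^1,…,x̃^d with x̃^k ∈ z_k·D_{|k} for each k, x = Σ_k x̃^k, and Σ_k (w^k · x̃^k + b^k z_k) ≥ y, and there also exist x̂^1,…,x̂^d with x̂^k ∈ z_k·D_{|k} for each k, x = Σ_k x̂^k, and Σ_k (w^k · x̂^k + b^k z_k) ≤ y. Then R_ideal = R_cayley. -/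
open scoped Pointwise

noncomputable section

/-- Dot product on `Fin n → ℝ`. -/
def dotp {n : ℕ} (w x : Fin n → ℝ) : ℝ := ∑ i, w i * x i

/-- The affine function `f^k(x) = w^k ⬝ x + b^k`. -/
def affK {η d : ℕ} (w : Fin d → Fin η → ℝ) (b : Fin d → ℝ) (k : Fin d) (x : Fin η → ℝ) : ℝ :=
  dotp (w k) x + b k

/-- `D_{|k}`: the part of the domain where `f^k` attains the maximum. -/
def DrestrK {η d : ℕ} (D : Set (Fin η → ℝ)) (w : Fin d → Fin η → ℝ) (b : Fin d → ℝ)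
    (k : Fin d) : Set (Fin η → ℝ) :=
  {x ∈ D | ∀ ℓ, affK w b ℓ x ≤ affK w b k x}

/-- `S_cayley = ∪_k {(x, f^k(x), e^k) : x ∈ D_{|k}}`. -/
def Scayley {η d : ℕ} (D : Set (Fin η → ℝ)) (w : Fin d → Fin η → ℝ) (b : Fin d → ℝ) :
    Set ((Fin η → ℝ) × ℝ × (Fin d → ℝ)) :=
  ⋃ k, (fun x => (x, affK w b k x, Pi.single k (1 : ℝ))) '' DrestrK D w b k

/-- The Cayley embedding `R_cayley = conv(S_cayley)`. -/
def Rcayley {η d : ℕ} (D : Set (Fin η → ℝ)) (w : Fin d → Fin η → ℝ) (b : Fin d → ℝ) :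
    Set ((Fin η → ℝ) × ℝ × (Fin d → ℝ)) :=
  convexHull ℝ (Scayley D w b)

lemma dotp_comb {n : ℕ} (w : Fin n → ℝ) (a b' : ℝ) (x y : Fin n → ℝ) :
    dotp w (a • x + b' • y) = a * dotp w x + b' * dotp w y := by
  simp [dotp, mul_add, Finset.sum_add_distrib, Finset.mul_sum, mul_left_comm]

lemma dotp_smul' {n : ℕ} (w : Fin n → ℝ) (c : ℝ) (x : Fin n → ℝ) :
    dotp w (c • x) = c * dotp w x := by
  simp [dotp, Finset.mul_sum, mul_left_comm]

lemma sum_single {d : ℕ} (z : Fin d → ℝ) :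
    ∑ k, z k • (Pi.single k (1 : ℝ) : Fin d → ℝ) = z := by
  funext j
  simp [Pi.single_apply, Finset.sum_ite_eq, mul_comm]

lemma memcomb {n : ℕ} {C : Set (Fin n → ℝ)} (hC : Convex ℝ C) (hne : C.Nonempty)
    {a b s t : ℝ} (ha : 0 ≤ a) (hb : 0 ≤ b) (hs : 0 ≤ s) (ht : 0 ≤ t)
    {u v : Fin n → ℝ} (hu : u ∈ s • C) (hv : v ∈ t • C) :
    a • u + b • v ∈ (a * s + b * t) • C := by
  obtain ⟨u', hu', rfl⟩ := hu
  obtain ⟨v', hv', rfl⟩ := hv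
  rcases eq_or_lt_of_le (by positivity : (0:ℝ) ≤ a * s + b * t) with hc | hc
  · have has : a * s = 0 := by nlinarith [mul_nonneg ha hs, mul_nonneg hb ht]
    have hbt : b * t = 0 := by nlinarith [mul_nonneg ha hs, mul_nonneg hb ht]
    have : a • s • u' + b • t • v' = 0 := by
      rw [smul_smul, smul_smul, has, hbt]; simp
    rw [this, ← hc]
    rw [Set.zero_smul_set hne]
    exact rfl
  · set c := a * s + b * t with hcdef
    refine ⟨(a * s / c) • u' + (b * t / c) • v', ?_, ?_⟩
    · exact hC hu' hv' (by positivity) (by positivity) (by field_simp; exact hcdef.symm)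
    · show c • ((a * s / c) • u' + (b * t / c) • v') = a • s • u' + b • t • v'
      rw [smul_add, smul_smul, smul_smul, smul_smul, smul_smul]
      congr 1 <;> congr 1 <;> field_simp

lemma convexD {η m : ℕ} (A : Fin m → Fin η → ℝ) (c : Fin m → ℝ) :
    Convex ℝ {x : Fin η → ℝ | ∀ i, dotp (A i) x ≤ c i} := by
  intro x hx y hy a b' ha hb hab i
  rw [dotp_comb]
  calc a * dotp (A i) x + b' * dotp (A i) y ≤ a * c i + b' * c i := by
        gcongr; exacts [hx i, hy i]
    _ = c i := by rw [← add_mul, hab, one_mul]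

lemma convexDk {η d : ℕ} {D : Set (Fin η → ℝ)} (hD : Convex ℝ D)
    (w : Fin d → Fin η → ℝ) (b : Fin d → ℝ) (k : Fin d) :
    Convex ℝ (DrestrK D w b k) := by
  intro x hx y hy a b' ha hb hab
  refine ⟨hD hx.1 hy.1 ha hb hab, fun ℓ => ?_⟩
  have h1 := mul_le_mul_of_nonneg_left (hx.2 ℓ) ha
  have h2 := mul_le_mul_of_nonneg_left (hy.2 ℓ) hb
  simp only [affK] at h1 h2 ⊢
  rw [dotp_comb, dotp_comb]
  have e1 : a * b ℓ + b' * b ℓ = b ℓ := by rw [← add_mul, hab, one_mul]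
  have e2 : a * b k + b' * b k = b k := by rw [← add_mul, hab, one_mul]
  linarith

lemma mem_cayley {η d : ℕ} (w : Fin d → Fin η → ℝ) (b : Fin d → ℝ)
    (D : Set (Fin η → ℝ)) (x : Fin η → ℝ) (z : Fin d → ℝ)
    (hz : z ∈ stdSimplex ℝ (Fin d)) (xt : Fin d → Fin η → ℝ)
    (hxt : ∀ k, xt k ∈ z k • DrestrK D w b k) (hx : x = ∑ k, xt k) :
    (x, ∑ k, (dotp (w k) (xt k) + b k * z k), z) ∈ Rcayley D w b := by
  have hch : ∀ k, ∃ u ∈ DrestrK D w b k, z k • u = xt k := fun k => hxt k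
  choose u hu hzu using hch
  set q : Fin d → (Fin η → ℝ) × ℝ × (Fin d → ℝ) :=
    fun k => (u k, affK w b k (u k), Pi.single k (1 : ℝ)) with hq
  have hqS : ∀ k, q k ∈ Scayley D w b := fun k =>
    Set.mem_iUnion.mpr ⟨k, ⟨u k, hu k, rfl⟩⟩
  have key : ∑ k, z k • q k ∈ convexHull ℝ (Scayley D w b) :=
    (convex_convexHull ℝ _).sum_mem (fun k _ => hz.1 k) hz.2
      (fun k _ => subset_convexHull ℝ _ (hqS k))
  have heq : ∑ k, z k • q k
      = (x, ∑ k, (dotp (w k) (xt k) + b k * z k), z) := by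
    have h1 : (∑ k, z k • q k).1 = x := by
      rw [hx, Prod.fst_sum]
      exact Finset.sum_congr rfl fun k _ => by simp [hq, hzu k]
    have h2 : (∑ k, z k • q k).2.1 = ∑ k, (dotp (w k) (xt k) + b k * z k) := by
      rw [Prod.snd_sum, Prod.fst_sum]
      refine Finset.sum_congr rfl fun k _ => ?_
      simp only [hq, Prod.smul_snd, Prod.smul_fst, smul_eq_mul, affK]
      rw [← hzu k, dotp_smul']
      ring
    have h3 : (∑ k, z k • q k).2.2 = z := by
      rw [Prod.snd_sum, Prod.snd_sum]
      simpa [hq] using sum_single z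
    exact Prod.ext h1 (Prod.ext h2 h3)
  rw [← heq]
  exact key

theorem stmt1 {η d : ℕ} (hη : 1 ≤ η) (hd : 1 ≤ d)
    (w : Fin d → Fin η → ℝ) (b : Fin d → ℝ)
    (D : Set (Fin η → ℝ))
    (hDpoly : ∃ (m : ℕ) (A : Fin m → Fin η → ℝ) (c : Fin m → ℝ),
      D = {x | ∀ i, dotp (A i) x ≤ c i})
    (hDne : D.Nonempty) (hDbd : Bornology.IsBounded D)
    (hirr : ∀ k, ∃ x ∈ D, ∀ ℓ, ℓ ≠ k → affK w b ℓ x < affK w b k x)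
    (Rideal : Set ((Fin η → ℝ) × ℝ × (Fin d → ℝ)))
    (hRideal : Rideal = {p | p.1 ∈ D ∧ p.2.2 ∈ stdSimplex ℝ (Fin d)
      ∧ (∃ xt : Fin d → Fin η → ℝ, (∀ k, xt k ∈ p.2.2 k • DrestrK D w b k)
          ∧ p.1 = ∑ k, xt k
          ∧ p.2.1 ≤ ∑ k, (dotp (w k) (xt k) + b k * p.2.2 k))
      ∧ (∃ xh : Fin d → Fin η → ℝ, (∀ k, xh k ∈ p.2.2 k • DrestrK D w b k)
          ∧ p.1 = ∑ k, xh k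
          ∧ ∑ k, (dotp (w k) (xh k) + b k * p.2.2 k) ≤ p.2.1)}) :
    Rideal = Rcayley D w b := by
  obtain ⟨m, A, c, hDeq⟩ := hDpoly
  have hD : Convex ℝ D := hDeq ▸ convexD A c
  have hne : ∀ k, (DrestrK D w b k).Nonempty := by
    intro k
    obtain ⟨x, hxD, hx⟩ := hirr k
    refine ⟨x, hxD, fun ℓ => ?_⟩
    rcases eq_or_ne ℓ k with rfl | h
    · exact le_refl _
    · exact (hx ℓ h).le
  apply Set.Subset.antisymm
  · -- Rideal ⊆ Rcayley
    rintro ⟨x, y, z⟩ hp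
    rw [hRideal] at hp
    obtain ⟨hxD, hz, ⟨xt, hxt, hxs, hyt⟩, ⟨xh, hxh, hxs', hyh⟩⟩ := hp
    have Pt := mem_cayley w b D x z hz xt hxt hxs
    have Ph := mem_cayley w b D x z hz xh hxh hxs'
    set St := ∑ k, (dotp (w k) (xt k) + b k * z k) with hSt
    set Sh := ∑ k, (dotp (w k) (xh k) + b k * z k) with hSh
    have hyIcc : y ∈ Set.Icc Sh St := ⟨hyh, hyt⟩
    rw [← segment_eq_Icc (le_trans hyh hyt)] at hyIcc
    obtain ⟨θ, μ, hθ, hμ, hsum, hyeq⟩ := hyIcc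
    have hseg : ((x, y, z) : (Fin η → ℝ) × ℝ × (Fin d → ℝ))
        = θ • (x, Sh, z) + μ • (x, St, z) := by
      have hx' : θ • x + μ • x = x := by rw [← add_smul, hsum, one_smul]
      have hz' : θ • z + μ • z = z := by rw [← add_smul, hsum, one_smul]
      simp only [Prod.smul_mk, Prod.mk_add_mk, smul_eq_mul]
      rw [hx', hz']
      simp only [smul_eq_mul] at hyeq
      rw [hyeq]
    rw [hseg]
    exact (convex_convexHull ℝ _) Ph Pt hθ hμ hsum
  · -- Rcayley ⊆ Rideal
    rw [hRideal]
    apply convexHull_min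
    · -- Scayley ⊆ the set
      rintro p hp
      obtain ⟨k, x, hx, rfl⟩ := Set.mem_iUnion.mp hp
      refine ⟨hx.1, ?_, ?_, ?_⟩
      · constructor
        · intro j
          rcases eq_or_ne j k with rfl | h
          · simp
          · simp [Pi.single_apply, h]
        · simp [Pi.single_apply, Finset.sum_ite_eq]
      all_goals {
        refine ⟨fun ℓ => (Pi.single k 1 : Fin d → ℝ) ℓ • x, fun ℓ => ?_, ?_, ?_⟩
        · rcases eq_or_ne ℓ k with rfl | h
          · exact Set.smul_mem_smul_set hx
          · obtain ⟨v, hv⟩ := hne ℓ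
            refine ⟨v, hv, ?_⟩
            simp [Pi.single_apply, h]
        · simp [Pi.single_apply, ite_smul, Finset.sum_ite_eq]
        · have hterm : ∀ ℓ, dotp (w ℓ) ((Pi.single k 1 : Fin d → ℝ) ℓ • x)
              + b ℓ * (Pi.single k 1 : Fin d → ℝ) ℓ
              = if ℓ = k then affK w b k x else 0 := by
            intro ℓ
            rcases eq_or_ne ℓ k with rfl | h
            · simp [Pi.single_apply, affK]
            · simp [Pi.single_apply, h, dotp_smul', dotp]
          rw [Finset.sum_congr rfl (fun ℓ _ => hterm ℓ)]
          simp [Finset.sum_ite_eq]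
      }
    · -- convexity of the set
      rintro ⟨x1, y1, z1⟩ ⟨h1D, h1z, ⟨xt1, hxt1, hs1, hy1⟩, ⟨xh1, hxh1, hs1', hy1'⟩⟩
        ⟨x2, y2, z2⟩ ⟨h2D, h2z, ⟨xt2, hxt2, hs2, hy2⟩, ⟨xh2, hxh2, hs2', hy2'⟩⟩
        a b' ha hb hab
      simp only [Prod.smul_mk, Prod.mk_add_mk, smul_eq_mul, Set.mem_setOf_eq]
      refine ⟨hD h1D h2D ha hb hab, convex_stdSimplex ℝ (Fin d) h1z h2z ha hb hab, ?_, ?_⟩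
      · refine ⟨fun k => a • xt1 k + b' • xt2 k, fun k => ?_, ?_, ?_⟩
        · have : (a • z1 + b' • z2) k = a * z1 k + b' * z2 k := by
            simp [smul_eq_mul]
          rw [this]
          exact memcomb (convexDk hD w b k) (hne k) ha hb (h1z.1 k) (h2z.1 k)
            (hxt1 k) (hxt2 k)
        · rw [Finset.sum_add_distrib, ← Finset.smul_sum, ← Finset.smul_sum, ← hs1, ← hs2]
        · have key : ∑ k, (dotp (w k) (a • xt1 k + b' • xt2 k)
              + b k * ((a • z1 + b' • z2) k))
              = a * ∑ k, (dotp (w k) (xt1 k) + b k * z1 k)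
                + b' * ∑ k, (dotp (w k) (xt2 k) + b k * z2 k) := by
            rw [Finset.mul_sum, Finset.mul_sum, ← Finset.sum_add_distrib]
            refine Finset.sum_congr rfl fun k _ => ?_
            rw [dotp_comb]
            simp only [Pi.add_apply, Pi.smul_apply, smul_eq_mul]
            ring
          rw [key]
          have t1 := mul_le_mul_of_nonneg_left hy1 ha
          have t2 := mul_le_mul_of_nonneg_left hy2 hb
          linarith
      · refine ⟨fun k => a • xh1 k + b' • xh2 k, fun k => ?_, ?_, ?_⟩
        · have : (a • z1 + b' • z2) k = a * z1 k + b' * z2 k := by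
            simp [smul_eq_mul]
          rw [this]
          exact memcomb (convexDk hD w b k) (hne k) ha hb (h1z.1 k) (h2z.1 k)
            (hxh1 k) (hxh2 k)
        · rw [Finset.sum_add_distrib, ← Finset.smul_sum, ← Finset.smul_sum, ← hs1', ← hs2']
        · have key : ∑ k, (dotp (w k) (a • xh1 k + b' • xh2 k)
              + b k * ((a • z1 + b' • z2) k))
              = a * ∑ k, (dotp (w k) (xh1 k) + b k * z1 k)
                + b' * ∑ k, (dotp (w k) (xh2 k) + b k * z2 k) := by
            rw [Finset.mul_sum, Finset.mul_sum, ← Finset.sum_add_distrib]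
            refine Finset.sum_congr rfl fun k _ => ?_
            rw [dotp_comb]
            simp only [Pi.add_apply, Pi.smul_apply, smul_eq_mul]
            ring
          rw [key]
          have t1 := mul_le_mul_of_nonneg_left hy1' ha
          have t2 := mul_le_mul_of_nonneg_left hy2' hb
          linarith
end
end

section
/- The set R_sharp equals the set of all (x, y, z) ∈ ℝ^η × ℝ × ℝ^d with x ∈ D and z ∈ Δ^d such that y ≥ w^k · x + b^k for every k = 1,…,d, and for every α ∈ ℝ^η, y ≤ α · x + Σ_{k=1}^d ( max_{x' ∈ D} (w^k − α) · x' + b^k ) z_k. -/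
open scoped Pointwise

noncomputable section

/-- The set `R_sharp`. -/
def RsharpSet {η d : ℕ} (D : Set (Fin η → ℝ)) (w : Fin d → Fin η → ℝ) (b : Fin d → ℝ) :
    Set ((Fin η → ℝ) × ℝ × (Fin d → ℝ)) :=
  {p | p.1 ∈ D ∧ p.2.2 ∈ stdSimplex ℝ (Fin d)
    ∧ (∀ k, affK w b k p.1 ≤ p.2.1)
    ∧ ∃ xt : Fin d → Fin η → ℝ, (∀ k, xt k ∈ p.2.2 k • D) ∧ p.1 = ∑ k, xt k
        ∧ p.2.1 ≤ ∑ k, (dotp (w k) (xt k) + b k * p.2.2 k)}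

lemma dotp_smul_right {n : ℕ} (a : Fin n → ℝ) (c : ℝ) (x : Fin n → ℝ) :
    dotp a (c • x) = c * dotp a x := by
  simp [dotp, Finset.mul_sum, mul_left_comm]

lemma dotp_add_right {n : ℕ} (a x y : Fin n → ℝ) :
    dotp a (x + y) = dotp a x + dotp a y := by
  simp [dotp, mul_add, Finset.sum_add_distrib]

lemma dotp_sum_right {n : ℕ} (a : Fin n → ℝ) {ι : Type*} (s : Finset ι) (v : ι → Fin n → ℝ) :
    dotp a (∑ k ∈ s, v k) = ∑ k ∈ s, dotp a (v k) := by
  simp only [dotp, Finset.sum_apply, Finset.mul_sum]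
  exact Finset.sum_comm

lemma dotp_sub_left {n : ℕ} (w a x : Fin n → ℝ) :
    dotp (w - a) x = dotp w x - dotp a x := by
  simp [dotp, sub_mul, Finset.sum_sub_distrib]

lemma continuous_dotp {n : ℕ} (a : Fin n → ℝ) : Continuous fun x => dotp a x := by
  unfold dotp
  exact continuous_finset_sum _ fun i _ => continuous_const.mul (continuous_apply i)

lemma sSup_dotp_image {n : ℕ} {D : Set (Fin n → ℝ)} (hc : IsCompact D) (hne : D.Nonempty)
    (v : Fin n → ℝ) :
    ∃ x0 ∈ D, sSup ((fun x' => dotp v x') '' D) = dotp v x0 ∧ ∀ x' ∈ D, dotp v x' ≤ dotp v x0 := by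
  obtain ⟨x0, hx0, hmax⟩ := hc.exists_isMaxOn hne ((continuous_dotp v).continuousOn)
  refine ⟨x0, hx0, ?_, fun x' hx' => hmax hx'⟩
  apply IsGreatest.csSup_eq
  exact ⟨⟨x0, hx0, rfl⟩, by rintro _ ⟨x', hx', rfl⟩; exact hmax hx'⟩

/-- The dual characterization of `R_sharp`.  Since `D` is a nonempty compact set, the maximum
over `D` is attained and coincides with `sSup` of the corresponding image set. -/
theorem stmt4 {η d : ℕ} (hη : 1 ≤ η) (hd : 1 ≤ d)
    (w : Fin d → Fin η → ℝ) (b : Fin d → ℝ)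
    (D : Set (Fin η → ℝ))
    (hDpoly : ∃ (m : ℕ) (A : Fin m → Fin η → ℝ) (c : Fin m → ℝ),
      D = {x | ∀ i, dotp (A i) x ≤ c i})
    (hDne : D.Nonempty) (hDbd : Bornology.IsBounded D) :
    RsharpSet D w b = {p : (Fin η → ℝ) × ℝ × (Fin d → ℝ) |
      p.1 ∈ D ∧ p.2.2 ∈ stdSimplex ℝ (Fin d)
      ∧ (∀ k, dotp (w k) p.1 + b k ≤ p.2.1)
      ∧ (∀ a : Fin η → ℝ,
          p.2.1 ≤ dotp a p.1
            + ∑ k, (sSup ((fun x' => dotp (w k - a) x') '' D) + b k) * p.2.2 k)} := by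
  obtain ⟨m, A, c, hD⟩ := hDpoly
  have hDclosed : IsClosed D := by
    rw [hD]
    have heq : {x : Fin η → ℝ | ∀ i, dotp (A i) x ≤ c i}
        = ⋂ i, {x | dotp (A i) x ≤ c i} := by
      ext x; simp [Set.mem_iInter]
    rw [heq]
    exact isClosed_iInter fun i => isClosed_le (continuous_dotp (A i)) continuous_const
  have hDconvex : Convex ℝ D := by
    rw [hD]
    intro p hp q hq s t hs ht hst
    intro i
    have h1 : dotp (A i) (s • p + t • q) = s * dotp (A i) p + t * dotp (A i) q := by
      rw [dotp_add_right, dotp_smul_right, dotp_smul_right]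
    have h2 : s * dotp (A i) p + t * dotp (A i) q ≤ s * c i + t * c i :=
      add_le_add (mul_le_mul_of_nonneg_left (hp i) hs) (mul_le_mul_of_nonneg_left (hq i) ht)
    have h3 : s * c i + t * c i = c i := by rw [← add_mul, hst, one_mul]
    calc dotp (A i) (s • p + t • q) = s * dotp (A i) p + t * dotp (A i) q := h1
      _ ≤ s * c i + t * c i := h2
      _ = c i := h3
  have hDcompact : IsCompact D := Metric.isCompact_iff_isClosed_bounded.2 ⟨hDclosed, hDbd⟩
  have hsmul_cpt : ∀ t : ℝ, IsCompact (t • D) := fun t => by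
    rw [← Set.image_smul]
    exact hDcompact.image (continuous_const_smul t)
  ext ⟨x, y, z⟩
  simp only [RsharpSet, Set.mem_setOf_eq, affK]
  constructor
  · rintro ⟨hx, hz, hf, xt, hxt, hxeq, hyle⟩
    refine ⟨hx, hz, hf, fun a => ?_⟩
    have hterm : ∀ k, dotp (w k) (xt k) + b k * z k
        ≤ dotp a (xt k) + (sSup ((fun x' => dotp (w k - a) x') '' D) + b k) * z k := by
      intro k
      obtain ⟨x', hx', hxeq'⟩ := Set.mem_smul_set.mp (hxt k)
      have hbdd : BddAbove ((fun x' => dotp (w k - a) x') '' D) :=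
        (hDcompact.image (continuous_dotp _)).bddAbove
      have h1 : dotp (w k - a) x' ≤ sSup ((fun x' => dotp (w k - a) x') '' D) :=
        le_csSup hbdd ⟨x', hx', rfl⟩
      have h2 : dotp (w k) (xt k) - dotp a (xt k) = z k * dotp (w k - a) x' := by
        rw [← dotp_sub_left, ← hxeq', dotp_smul_right]
      have h3 : z k * dotp (w k - a) x' ≤ z k * sSup ((fun x' => dotp (w k - a) x') '' D) :=
        mul_le_mul_of_nonneg_left h1 (hz.1 k)
      have h4 : (sSup ((fun x' => dotp (w k - a) x') '' D) + b k) * z k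
          = z k * sSup ((fun x' => dotp (w k - a) x') '' D) + b k * z k := by ring
      linarith
    calc y ≤ ∑ k, (dotp (w k) (xt k) + b k * z k) := hyle
      _ ≤ ∑ k, (dotp a (xt k) + (sSup ((fun x' => dotp (w k - a) x') '' D) + b k) * z k) :=
          Finset.sum_le_sum fun k _ => hterm k
      _ = dotp a x + ∑ k, (sSup ((fun x' => dotp (w k - a) x') '' D) + b k) * z k := by
          rw [Finset.sum_add_distrib, hxeq, dotp_sum_right]
  · rintro ⟨hx, hz, hf, hdual⟩
    refine ⟨hx, hz, hf, ?_⟩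
    set Φ : (Fin d → Fin η → ℝ) → (Fin η → ℝ) × ℝ :=
      fun xt => (∑ k, xt k, ∑ k, (dotp (w k) (xt k) + b k * z k)) with hΦdef
    set K : Set (Fin d → Fin η → ℝ) := Set.univ.pi fun k => z k • D with hKdef
    have hKc : IsCompact K := isCompact_univ_pi fun k => hsmul_cpt (z k)
    have hΦ : Continuous Φ := by
      refine Continuous.prodMk ?_ ?_
      · exact continuous_finset_sum _ fun k _ => continuous_apply k
      · exact continuous_finset_sum _ fun k _ =>
          ((continuous_dotp (w k)).comp (continuous_apply k)).add continuous_const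
    set T : Set ((Fin η → ℝ) × ℝ) := Φ '' K with hTdef
    have hTc : IsCompact T := hKc.image hΦ
    have hTconv : Convex ℝ T := by
      rintro p ⟨xt, hxt, rfl⟩ q ⟨yt, hyt, rfl⟩ s t hs ht hst
      refine ⟨s • xt + t • yt, fun k _ => ?_, ?_⟩
      · have := (hDconvex.smul (z k)) (hxt k (Set.mem_univ k)) (hyt k (Set.mem_univ k)) hs ht hst
        simpa using this
      · have h1 : ∑ k, (s • xt + t • yt) k = s • ∑ k, xt k + t • ∑ k, yt k := by
          simp [Finset.smul_sum, Finset.sum_add_distrib]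
        have h2 : ∑ k, (dotp (w k) ((s • xt + t • yt) k) + b k * z k)
            = s * ∑ k, (dotp (w k) (xt k) + b k * z k)
              + t * ∑ k, (dotp (w k) (yt k) + b k * z k) := by
          rw [Finset.mul_sum, Finset.mul_sum, ← Finset.sum_add_distrib]
          refine Finset.sum_congr rfl fun k _ => ?_
          have hc : (s • xt + t • yt) k = s • xt k + t • yt k := rfl
          rw [hc, dotp_add_right, dotp_smul_right, dotp_smul_right]
          linear_combination (-(b k * z k)) * hst
        simp only [hΦdef, Prod.ext_iff]
        exact ⟨h1, h2⟩
    set C : Set ((Fin η → ℝ) × ℝ) := {(0 : Fin η → ℝ)} ×ˢ Set.Iic (0:ℝ) with hCdef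
    have hCclosed : IsClosed C := isClosed_singleton.prod isClosed_Iic
    have hCconv : Convex ℝ C := (convex_singleton _).prod (convex_Iic _)
    have hSclosed : IsClosed (T + C) := hCclosed.add_left_of_isCompact hTc
    have hSconv : Convex ℝ (T + C) := hTconv.add hCconv
    suffices hmem : ((x, y) : (Fin η → ℝ) × ℝ) ∈ T + C by
      obtain ⟨p, hp, q, hq, hpq⟩ := Set.mem_add.mp hmem
      obtain ⟨xt, hxtK, rfl⟩ := hp
      obtain ⟨hq1, hq2⟩ := hq
      have hpq1 : (∑ k, xt k) + q.1 = x := congrArg Prod.fst hpq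
      have hpq2 : (∑ k, (dotp (w k) (xt k) + b k * z k)) + q.2 = y := congrArg Prod.snd hpq
      have hq10 : q.1 = 0 := hq1
      refine ⟨xt, fun k => hxtK k (Set.mem_univ k), ?_, ?_⟩
      · rw [← hpq1, hq10, add_zero]
      · have : q.2 ≤ 0 := hq2
        linarith
    by_contra hnot
    obtain ⟨f, u, hfu, hux⟩ := geometric_hahn_banach_closed_point hSconv hSclosed hnot
    set β : ℝ := f ((0 : Fin η → ℝ), (1:ℝ)) with hβdef
    set e : Fin η → (Fin η → ℝ) × ℝ := fun i => ((Pi.single i (1:ℝ) : Fin η → ℝ), (0:ℝ))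
      with hedef
    set cvec : Fin η → ℝ := fun i => f (e i) with hcvdef
    have hdecomp : ∀ (v : Fin η → ℝ) (t : ℝ),
        f (v, t) = (∑ i, v i * cvec i) + t * β := by
      intro v t
      have hv0 : ((v, (0:ℝ)) : (Fin η → ℝ) × ℝ) = ∑ i, v i • e i := by
        rw [Prod.ext_iff]
        constructor
        · rw [Prod.fst_sum]
          have h1 : ∀ i ∈ Finset.univ, (v i • e i).1 = Pi.single i (v i) := by
            intro i _
            show v i • (Pi.single i (1:ℝ) : Fin η → ℝ) = Pi.single i (v i)
            ext j; by_cases h : j = i <;> simp [Pi.single_apply, h]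
          rw [Finset.sum_congr rfl h1]
          show v = ∑ i, Pi.single i (v i)
          ext j
          rw [Finset.sum_apply]
          simp [Pi.single_apply]
        · rw [Prod.snd_sum]
          have h2 : ∀ i ∈ Finset.univ, (v i • e i).2 = (0:ℝ) := by
            intro i _; show v i • (0:ℝ) = 0; simp
          rw [Finset.sum_congr rfl h2]
          simp
      have h0t : (((0 : Fin η → ℝ), t) : (Fin η → ℝ) × ℝ)
          = t • (((0 : Fin η → ℝ), (1:ℝ)) : (Fin η → ℝ) × ℝ) := by
        rw [Prod.smul_mk]; simp
      have hsplit : ((v, t) : (Fin η → ℝ) × ℝ)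
          = ((v, 0) : (Fin η → ℝ) × ℝ) + ((0 : Fin η → ℝ), t) := by
        rw [Prod.mk_add_mk]; simp
      rw [hsplit, map_add, hv0, map_sum, h0t, map_smul]
      have h3 : ∀ i ∈ Finset.univ, f (v i • e i) = v i * cvec i := by
        intro i _; rw [map_smul]; rfl
      rw [Finset.sum_congr rfl h3]
      rfl
    have hxt0K : (fun k => z k • x) ∈ K := fun k _ => Set.smul_mem_smul_set hx
    set s0 : ℝ := ∑ k, (dotp (w k) (z k • x) + b k * z k) with hs0
    have hsum0 : ∑ k, z k • x = x := by
      rw [← Finset.sum_smul, hz.2, one_smul]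
    have hT0 : ((x, s0) : (Fin η → ℝ) × ℝ) ∈ T := ⟨_, hxt0K, by simp only [hΦdef, hsum0]; rfl⟩
    have hS0 : ∀ t : ℝ, t ≤ 0 → (((x, s0 + t)) : (Fin η → ℝ) × ℝ) ∈ T + C := by
      intro t ht
      have := Set.add_mem_add hT0 (show ((0 : Fin η → ℝ), t) ∈ C from ⟨rfl, Set.mem_Iic.mpr ht⟩)
      simpa using this
    have hshift : ∀ t : ℝ, f (x, s0 + t) = f (x, s0) + t * β := by
      intro t; rw [hdecomp, hdecomp]; ring
    have hfxs0 : f (x, s0) < u := by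
      have := hfu _ (hS0 0 le_rfl)
      simpa using this
    have hfxy : u < f (x, y) := hux
    have hfy : f (x, y) = f (x, s0) + (y - s0) * β := by
      have := hshift (y - s0)
      rwa [add_sub_cancel] at this
    have hprod : 0 < (y - s0) * β := by
      rw [hfy] at hfxy; linarith
    have hβge : 0 ≤ β := by
      by_contra hneg
      push_neg at hneg
      have hne : β ≠ 0 := ne_of_lt hneg
      have hnum : 0 < u - f (x, s0) := by linarith
      have htle : (u - f (x, s0)) / β ≤ 0 := le_of_lt (div_neg_of_pos_of_neg hnum hneg)
      have hlt := hfu _ (hS0 _ htle)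
      rw [hshift, div_mul_cancel₀ _ hne] at hlt
      linarith
    have hβpos : 0 < β := by
      rcases hβge.lt_or_eq with h | h
      · exact h
      · exfalso; rw [← h, mul_zero] at hprod; exact lt_irrefl 0 hprod
    set a : Fin η → ℝ := fun i => -cvec i / β with hadef
    have hcv : ∀ v : Fin η → ℝ, ∑ i, v i * cvec i = -(β * dotp a v) := by
      intro v
      have hβne : β ≠ 0 := ne_of_gt hβpos
      have hterm : ∀ i, β * (a i * v i) = -(v i * cvec i) := by
        intro i
        show β * (-cvec i / β * v i) = -(v i * cvec i)
        field_simp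
      have : β * dotp a v = ∑ i, β * (a i * v i) := by
        rw [dotp, Finset.mul_sum]
      rw [this, Finset.sum_congr rfl fun i _ => hterm i, Finset.sum_neg_distrib, neg_neg]
    have hkey : ∀ xt : Fin d → Fin η → ℝ, (∀ k, xt k ∈ z k • D) →
        ∑ k, (dotp (w k) (xt k) + b k * z k) - dotp a (∑ k, xt k) < y - dotp a x := by
      intro xt hxt'
      have hmemS : Φ xt ∈ T + C := by
        have hT : Φ xt ∈ T := ⟨xt, fun k _ => hxt' k, rfl⟩
        have := Set.add_mem_add hT (show ((0 : Fin η → ℝ), (0:ℝ)) ∈ C from ⟨rfl, Set.mem_Iic.mpr le_rfl⟩)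
        rwa [show (((0 : Fin η → ℝ), (0:ℝ)) : (Fin η → ℝ) × ℝ) = 0 from rfl, add_zero] at this
      have h1 : f (Φ xt) < u := hfu _ hmemS
      have e1 : f (Φ xt) = -(β * dotp a (∑ k, xt k))
          + (∑ k, (dotp (w k) (xt k) + b k * z k)) * β := by
        rw [show Φ xt = ((∑ k, xt k, ∑ k, (dotp (w k) (xt k) + b k * z k)) :
          (Fin η → ℝ) × ℝ) from rfl, hdecomp, hcv]
      have e2 : f (x, y) = -(β * dotp a x) + y * β := by rw [hdecomp, hcv]
      have h4 : f (Φ xt) < f (x, y) := h1.trans hfxy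
      rw [e1, e2] at h4
      have h5 : (∑ k, (dotp (w k) (xt k) + b k * z k) - dotp a (∑ k, xt k)) * β
          < (y - dotp a x) * β := by nlinarith
      exact lt_of_mul_lt_mul_right h5 hβpos.le
    choose x0 hx0D hx0eq hx0max using fun k => sSup_dotp_image hDcompact hDne (w k - a)
    have hfeas : ∀ k, (fun k => z k • x0 k) k ∈ z k • D :=
      fun k => Set.smul_mem_smul_set (hx0D k)
    have h5 := hkey (fun k => z k • x0 k) hfeas
    have h6 : ∑ k, (dotp (w k) (z k • x0 k) + b k * z k) - dotp a (∑ k, z k • x0 k)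
        = ∑ k, (sSup ((fun x' => dotp (w k - a) x') '' D) + b k) * z k := by
      rw [dotp_sum_right, ← Finset.sum_sub_distrib]
      refine Finset.sum_congr rfl fun k _ => ?_
      rw [hx0eq k, dotp_smul_right, dotp_smul_right, dotp_sub_left]
      ring
    rw [h6] at h5
    have hda := hdual a
    linarith
end
end
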